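/- Let k ≥ 4 and s ∈ {4,…,k}. Let F'_2 be the graph with vertex set {u, v, w, u', w₁, w₂} and edges u'w₁, u'w₂, w₁w, w₂w, uu', w₁w₂, u'v. Let F''_2 be obtained from F'_2 by adding vertices y₄,…,y_k adjacent to all vertices of F'_2 except u, and let F_s = F''_2 − u'y_s. Let f assign colors in [k] to u, v, w, y₄,…,y_k with f(y_i) = i for 4 ≤ i ≤ k. Then f extends to a proper k-coloring of F_s if and only if f(v), f(w) ∈ {1,2,3} and (f(u) ≠ s, or f(v) ≠ f(w)). -/

import Mathlib

/-- `c` is a proper `k`-coloring of `G` with colors in `[k] = {1,…,k}`. -/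
def IsProperKColoring {V : Type*} (G : SimpleGraph V) (k : ℕ) (c : V → ℕ) : Prop :=
  (∀ v, c v ∈ Finset.Icc 1 k) ∧ ∀ ⦃x y⦄, G.Adj x y → c x ≠ c y

/-- Index type for the vertices `y₄, …, y_k`. -/
def Yk (k : ℕ) : Type := {i : ℕ // 4 ≤ i ∧ i ≤ k}

/-- Vertices: `u = 0`, `v = 1`, `w = 2`, `u' = 3`, `w₁ = 4`, `w₂ = 5`, plus
`y₄, …, y_k`.  Edges of `F'₂`: `u'w₁, u'w₂, w₁w, w₂w, uu', w₁w₂, u'v`; each `y_j`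
adjacent to all vertices of `F'₂` except `u`, with the edge `u'y_s` removed. -/
def relFs (k s : ℕ) : (Fin 6 ⊕ Yk k) → (Fin 6 ⊕ Yk k) → Prop
  | .inl a, .inl b =>
      (a, b) ∈ ([(3,4),(3,5),(4,2),(5,2),(0,3),(4,5),(3,1)] : List (Fin 6 × Fin 6))
  | .inl a, .inr j => a ≠ 0 ∧ ¬(a = 3 ∧ j.1 = s)
  | _, _ => False

/-- The gadget `F_s = F''₂ − u'y_s`. -/
def Fs (k s : ℕ) : SimpleGraph (Fin 6 ⊕ Yk k) := SimpleGraph.fromRel (relFs k s)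

lemma vec6_val_five {α : Type*} (a b c d e g : α) : ![a, b, c, d, e, g] 5 = g := rfl

lemma vec6_val_two {α : Type*} (a b c d e g : α) : ![a, b, c, d, e, g] 2 = c := rfl

lemma vec6_val_three {α : Type*} (a b c d e g : α) : ![a, b, c, d, e, g] 3 = d := rfl

lemma vec6_val_four {α : Type*} (a b c d e g : α) : ![a, b, c, d, e, g] 4 = e := rfl

/-- A function `f` on `{u, v, w, y₄, …, y_k}` with `f(yᵢ) = i` extends to a proper
`k`-coloring of `F_s` iff `f v, f w ∈ {1,2,3}` and (`f u ≠ s` or `f v ≠ f w`). -/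
theorem Fs_extension (k s : ℕ) (hk : 4 ≤ k) (hs : 4 ≤ s ∧ s ≤ k)
    (f : (Fin 6 ⊕ Yk k) → ℕ)
    (hfu : f (.inl 0) ∈ Finset.Icc 1 k) (hfv : f (.inl 1) ∈ Finset.Icc 1 k)
    (hfw : f (.inl 2) ∈ Finset.Icc 1 k)
    (hfy : ∀ y : Yk k, f (.inr y) = y.1) :
    (∃ c : (Fin 6 ⊕ Yk k) → ℕ, IsProperKColoring (Fs k s) k c ∧
        c (.inl 0) = f (.inl 0) ∧ c (.inl 1) = f (.inl 1) ∧ c (.inl 2) = f (.inl 2) ∧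
        ∀ y : Yk k, c (.inr y) = f (.inr y)) ↔
      (f (.inl 1) ∈ ({1,2,3} : Set ℕ) ∧ f (.inl 2) ∈ ({1,2,3} : Set ℕ) ∧
        (f (.inl 0) ≠ s ∨ f (.inl 1) ≠ f (.inl 2))) := by
  obtain ⟨hs4, hsk⟩ := hs
  simp only [Finset.mem_Icc] at hfu hfv hfw
  simp only [Set.mem_insert_iff, Set.mem_singleton_iff]
  constructor
  · rintro ⟨c, ⟨hmem, hadj⟩, h0, h1, h2, hy⟩
    have hcy : ∀ y : Yk k, c (.inr y) = y.1 := fun y => (hy y).trans (hfy y)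
    have hb : ∀ a : Fin 6, a ≠ 0 → ¬(a = 3) → c (.inl a) ≤ 3 := by
      intro a ha0 ha3
      by_contra hlt
      push_neg at hlt
      have hk' : c (.inl a) ≤ k := (Finset.mem_Icc.mp (hmem _)).2
      set j : Yk k := ⟨c (.inl a), by omega, hk'⟩ with hj
      have hadj' : (Fs k s).Adj (.inl a) (.inr j) := by
        rw [Fs, SimpleGraph.fromRel_adj]
        exact ⟨by simp, Or.inl ⟨ha0, fun h => ha3 h.1⟩⟩
      exact hadj hadj' (hcy j).symm
    have hb3 : c (.inl 3) ≤ 3 ∨ c (.inl 3) = s := by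
      by_contra h
      push_neg at h
      obtain ⟨h3, hns⟩ := h
      have hk' : c (.inl 3) ≤ k := (Finset.mem_Icc.mp (hmem _)).2
      set j : Yk k := ⟨c (.inl 3), by omega, hk'⟩ with hj
      have hadj' : (Fs k s).Adj (.inl 3) (.inr j) := by
        rw [Fs, SimpleGraph.fromRel_adj]
        exact ⟨by simp, Or.inl ⟨by decide, fun h => hns h.2⟩⟩
      exact hadj hadj' (hcy j).symm
    have adjE : ∀ a b : Fin 6,
        ((a, b) ∈ ([(3,4),(3,5),(4,2),(5,2),(0,3),(4,5),(3,1)] : List (Fin 6 × Fin 6))) →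
        a ≠ b → (Fs k s).Adj (.inl a) (.inl b) := by
      intro a b h hne
      rw [Fs, SimpleGraph.fromRel_adj]
      exact ⟨by simpa using hne, Or.inl h⟩
    have e34 := hadj (adjE 3 4 (by decide) (by decide))
    have e35 := hadj (adjE 3 5 (by decide) (by decide))
    have e42 := hadj (adjE 4 2 (by decide) (by decide))
    have e52 := hadj (adjE 5 2 (by decide) (by decide))
    have e03 := hadj (adjE 0 3 (by decide) (by decide))
    have e45 := hadj (adjE 4 5 (by decide) (by decide))
    have e31 := hadj (adjE 3 1 (by decide) (by decide))
    have hb1 := hb 1 (by decide) (by decide)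
    have hb2 := hb 2 (by decide) (by decide)
    have hb4 := hb 4 (by decide) (by decide)
    have hb5 := hb 5 (by decide) (by decide)
    have m3 := Finset.mem_Icc.mp (hmem (.inl 3))
    have m4 := Finset.mem_Icc.mp (hmem (.inl 4))
    have m5 := Finset.mem_Icc.mp (hmem (.inl 5))
    refine ⟨by omega, by omega, ?_⟩
    by_contra hc
    push_neg at hc
    omega
  · rintro ⟨hv, hw, hor⟩
    refine ⟨Sum.elim ![f (.inl 0), f (.inl 1), f (.inl 2),
        if f (.inl 0) = s then f (.inl 2) else s,
        if f (.inl 2) = 1 then 2 else 1,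
        if f (.inl 2) = 3 then 2 else 3] (fun j => j.1), ⟨?_, ?_⟩,
      by simp, by simp, by simp, fun y => by simp [hfy y]⟩
    · rintro (a | j)
      · fin_cases a <;>
          · simp only [Sum.elim_inl]
            norm_num [Matrix.cons_val_succ, vec6_val_five, Finset.mem_Icc]
            first
            | (split_ifs <;> omega)
            | omega
      · simp only [Sum.elim_inr, Finset.mem_Icc]
        obtain ⟨j4, jk⟩ := j.2
        omega
    · have key : ∀ x y, relFs k s x y →
          Sum.elim ![f (.inl 0), f (.inl 1), f (.inl 2),
            if f (.inl 0) = s then f (.inl 2) else s,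
            if f (.inl 2) = 1 then 2 else 1,
            if f (.inl 2) = 3 then 2 else 3] (fun j : Yk k => j.1) x ≠
          Sum.elim ![f (.inl 0), f (.inl 1), f (.inl 2),
            if f (.inl 0) = s then f (.inl 2) else s,
            if f (.inl 2) = 1 then 2 else 1,
            if f (.inl 2) = 3 then 2 else 3] (fun j : Yk k => j.1) y := by
        rintro (a | j) (b | j') h
        · simp only [relFs, List.mem_cons, List.not_mem_nil, or_false,
            Prod.mk.injEq] at h
          rcases h with ⟨rfl, rfl⟩ | ⟨rfl, rfl⟩ | ⟨rfl, rfl⟩ | ⟨rfl, rfl⟩ |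
            ⟨rfl, rfl⟩ | ⟨rfl, rfl⟩ | ⟨rfl, rfl⟩ <;>
          · simp only [Sum.elim_inl]
            norm_num [Matrix.cons_val_succ, vec6_val_five, vec6_val_two, vec6_val_three,
              vec6_val_four]
            split_ifs <;> omega
        · obtain ⟨ha0, ha3⟩ := h
          obtain ⟨j4, jk⟩ := j'.2
          have hja : a = 3 → j'.1 ≠ s := fun h hh => ha3 ⟨h, hh⟩
          fin_cases a
          · exact absurd rfl ha0
          all_goals
            simp only [Sum.elim_inl, Sum.elim_inr]
            norm_num [Matrix.cons_val_succ, vec6_val_five]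
          · omega
          · omega
          · have := hja rfl
            split_ifs <;> omega
          · split_ifs <;> omega
          · split_ifs <;> omega
        · exact h.elim
        · exact h.elim
      intro x y hxy
      rw [Fs, SimpleGraph.fromRel_adj] at hxy
      obtain ⟨-, h | h⟩ := hxy
      · exact key _ _ h
      · exact (key _ _ h).symm
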